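/- Let ε ∈ (0,1/4), let R ⊆ {0,1}^d be ε-good with d ≥ 10, and let B ⊆ R. Define L = {x ∉ B : deg_{Q^d}(x,B) > (1−2ε)d}. If |L| ≥ 2^d/20, then the number of edges of the graph of conv(R) between B and R\B is at least d·2^d/80, and in particular at least (|B|/8)·log₂(2^d/|B|). -/

import Mathlib

noncomputable section

/-- The dot product on `ℝ^n`. -/
def dot {n : ℕ} (c x : Fin n → ℝ) : ℝ := ∑ i, c i * x i

/-- The vertex set of the 0/1-cube in `ℝ^n`. -/
def cube01 (n : ℕ) : Set (Fin n → ℝ) := {x | ∀ i, x i = 0 ∨ x i = 1}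

/-- `F` is the vertex set of a face of the polytope `conv P`, where `P` is the set of
vertices of the polytope: there is a supporting linear functional attaining its maximum
on `P` exactly on `F`. -/
def IsFaceOf {n : ℕ} (P F : Set (Fin n → ℝ)) : Prop :=
  ∃ (c : Fin n → ℝ) (γ : ℝ), (∀ x ∈ P, dot c x ≤ γ) ∧ F = {x | x ∈ P ∧ dot c x = γ}

/-- `{x, y}` is an edge (1-dimensional face) of the polytope `conv P`. -/
def IsPolytopeEdge {n : ℕ} (P : Set (Fin n → ℝ)) (x y : Fin n → ℝ) : Prop :=
  x ∈ P ∧ y ∈ P ∧ x ≠ y ∧ IsFaceOf P {x, y}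

/-- The number of edges of the graph of the polytope `conv P` with one endpoint in `A`
and the other endpoint in `B`. -/
def polyEdgeCount {n : ℕ} (P A B : Set (Fin n → ℝ)) : ℕ :=
  {p : (Fin n → ℝ) × (Fin n → ℝ) | p.1 ∈ A ∧ p.2 ∈ B ∧ IsPolytopeEdge P p.1 p.2}.ncard

/-- Adjacency in the hypercube graph `Q^d`: the two points differ in exactly one coordinate. -/
def cubeAdj {d : ℕ} (x y : Fin d → ℝ) : Prop := {i | x i ≠ y i}.ncard = 1

/-- The number of hypercube-neighbors of `x` belonging to `C`. -/
def cubeDeg {d : ℕ} (x : Fin d → ℝ) (C : Set (Fin d → ℝ)) : ℕ :=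
  {y | y ∈ C ∧ cubeAdj x y}.ncard

/-- The number of hypercube edges with one endpoint in `A` and the other in `B`. -/
def cubeEdgeCount {d : ℕ} (A B : Set (Fin d → ℝ)) : ℕ :=
  {p : (Fin d → ℝ) × (Fin d → ℝ) | p.1 ∈ A ∧ p.2 ∈ B ∧ cubeAdj p.1 p.2}.ncard

/-- `R ⊆ {0,1}^d` is `ε`-good: (R1) every vertex of `R` has more than `(1-ε)d`
hypercube-neighbors in `R`; (R2) every `C ⊆ {0,1}^d` with `|C| ≥ 2^d/20` satisfies
`|C ∩ R| ≥ 2^d/40`. -/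
def epsGood {d : ℕ} (ε : ℝ) (R : Set (Fin d → ℝ)) : Prop :=
  R ⊆ cube01 d ∧
  (∀ x ∈ R, (1 - ε) * d < (cubeDeg x R : ℝ)) ∧
  (∀ C ⊆ cube01 d, (2 : ℝ) ^ d / 20 ≤ (C.ncard : ℝ) → (2 : ℝ) ^ d / 40 ≤ ((C ∩ R).ncard : ℝ))

/-- Projection onto the first `d` coordinates. -/
def proj {n d : ℕ} (h : d ≤ n) (x : Fin n → ℝ) : Fin d → ℝ := fun i => x (Fin.castLE h i)

/-- The characteristic vector of a subset of `[n]`. -/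
def charVec {n : ℕ} (A : Finset (Fin n)) : Fin n → ℝ := fun i => if i ∈ A then 1 else 0

/-- A face of the cube `[0,1]^n`, given by fixing the coordinates in the support of `σ`;
its dimension is the number of indices where `σ` is `none`. -/
def cubeFace {n : ℕ} (σ : Fin n → Option Bool) : Set (Fin n → ℝ) :=
  {z | z ∈ cube01 n ∧ ∀ i b, σ i = some b → z i = if b then 1 else 0}


/-! ### Auxiliary lemmas -/

lemma cube01_finite (d : ℕ) : (cube01 d).Finite := by
  have h : cube01 d ⊆ Set.pi Set.univ (fun _ : Fin d => ({0,1} : Set ℝ)) := by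
    intro x hx i _
    rcases hx i with h | h <;> simp [h]
  exact (Set.Finite.pi (fun _ => (Set.finite_singleton (1:ℝ)).insert 0)).subset h

lemma log_le_mul_log_two {t : ℝ} (ht : 1 ≤ t) : Real.log t ≤ t * Real.log 2 := by
  have hs : (1:ℝ) ≤ Real.sqrt t := Real.one_le_sqrt.mpr ht
  have h1 : Real.log (Real.sqrt t) ≤ Real.sqrt t - 1 :=
    Real.log_le_sub_one_of_pos (by linarith)
  have h2 : Real.log t = 2 * Real.log (Real.sqrt t) := by
    rw [Real.log_sqrt (by linarith)]; ring
  have h3 : Real.sqrt t ^ 2 = t := Real.sq_sqrt (by linarith)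
  have h4 : (0.6931471803 : ℝ) < Real.log 2 := Real.log_two_gt_d9
  nlinarith [sq_nonneg (Real.sqrt t - 2), sq_nonneg (Real.sqrt t)]

lemma ncard_le_of_subset_cube {d : ℕ} {B : Set (Fin d → ℝ)} (hB : B ⊆ cube01 d) :
    B.ncard ≤ 2 ^ d := by
  have h : B.ncard ≤ (Set.univ : Set (Fin d → Bool)).ncard := by
    apply Set.ncard_le_ncard_of_injOn (fun x i => decide (x i = 1))
    · intro x _; trivial
    · intro x hxB y hyB h
      funext i
      have h' := congrFun h i
      rcases hB hxB i with h1 | h1 <;> rcases hB hyB i with h2 | h2 <;> simp_all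
  simpa [Set.ncard_univ, Nat.card_eq_fintype_card] using h

lemma cubeAdj_symm' {d : ℕ} {x y : Fin d → ℝ} : cubeAdj x y ↔ cubeAdj y x := by
  unfold cubeAdj
  have : {i | y i ≠ x i} = {i | x i ≠ y i} := by ext i; exact ne_comm
  rw [this]

lemma adj_isPolytopeEdge {d : ℕ} {R : Set (Fin d → ℝ)} (hRc : R ⊆ cube01 d)
    {x y : Fin d → ℝ} (hx : x ∈ R) (hy : y ∈ R) (hadj : cubeAdj x y) :
    IsPolytopeEdge R x y := by
  obtain ⟨i0, hi0⟩ := Set.ncard_eq_one.mp hadj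
  have hxi0 : x i0 ≠ y i0 := by
    have : i0 ∈ {j | x j ≠ y j} := hi0 ▸ rfl
    exact this
  have hxy : x ≠ y := fun h => hxi0 (by rw [h])
  have hdiff : ∀ i, i ≠ i0 → x i = y i := by
    intro i hi
    by_contra h
    have : i ∈ {j | x j ≠ y j} := h
    rw [hi0] at this
    exact hi this
  set c : Fin d → ℝ := fun i => if i = i0 then 0 else 2 * x i - 1 with hc
  have hsum : ∀ z : Fin d → ℝ, dot c x - dot c z = ∑ i, c i * (x i - z i) := by
    intro z
    simp only [dot, mul_sub, Finset.sum_sub_distrib]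
  have hterm : ∀ z ∈ cube01 d, ∀ i, 0 ≤ c i * (x i - z i) := by
    intro z hz i
    by_cases h : i = i0
    · simp [hc, h]
    · simp only [hc, if_neg h]
      rcases hRc hx i with h1 | h1 <;> rcases hz i with h2 | h2 <;>
        rw [h1, h2] <;> norm_num
  have hle : ∀ z ∈ cube01 d, dot c z ≤ dot c x := by
    intro z hz
    have h0 := Finset.sum_nonneg (fun i (_ : i ∈ Finset.univ) => hterm z hz i)
    have := hsum z
    linarith
  have hyx : dot c y = dot c x := by
    have h0 : ∑ i, c i * (x i - y i) = 0 := by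
      apply Finset.sum_eq_zero
      intro i _
      by_cases h : i = i0
      · simp [hc, h]
      · rw [hdiff i h]; ring
    have := hsum y
    linarith
  refine ⟨hx, hy, hxy, c, dot c x, fun p hp => hle p (hRc hp), ?_⟩
  ext z
  simp only [Set.mem_insert_iff, Set.mem_singleton_iff, Set.mem_setOf_eq]
  constructor
  · rintro (rfl | rfl)
    · exact ⟨hx, rfl⟩
    · exact ⟨hy, hyx⟩
  · rintro ⟨hzR, hzeq⟩
    have hz := hRc hzR
    have hzero : ∀ i ∈ Finset.univ, c i * (x i - z i) = 0 := by
      rw [← Finset.sum_eq_zero_iff_of_nonneg (fun i _ => hterm z hz i)]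
      rw [← hsum z]
      linarith
    have hagree : ∀ i, i ≠ i0 → z i = x i := by
      intro i hi
      have h0 := hzero i (Finset.mem_univ i)
      simp only [hc, if_neg hi] at h0
      rcases hRc hx i with h1 | h1 <;> rcases hz i with h2 | h2 <;>
        rw [h1, h2] <;> rw [h1, h2] at h0 <;> first | rfl | (norm_num at h0)
    by_cases hzi : z i0 = x i0
    · left
      funext i
      by_cases h : i = i0
      · rw [h]; exact hzi
      · exact hagree i h
    · right
      funext i
      by_cases h : i = i0
      · subst h
        rcases hz i with h2 | h2 <;> rcases hRc hx i with h1 | h1 <;>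
          rcases hRc hy i with h3 | h3 <;>
          first
            | (exact h2.trans h3.symm)
            | (exact absurd (h1.trans h3.symm) hxi0)
            | (exact absurd (h2.trans h1.symm) hzi)
      · rw [hagree i h, hdiff i h]

lemma ncard_pairs {d : ℕ} {B L : Set (Fin d → ℝ)} (hBf : B.Finite) (hLf : L.Finite) :
    ({p : (Fin d → ℝ) × (Fin d → ℝ) | p.1 ∈ B ∧ p.2 ∈ L ∧ cubeAdj p.1 p.2}).ncard
      = ∑ y ∈ hLf.toFinset, cubeDeg y B := by
  classical
  set S := {p : (Fin d → ℝ) × (Fin d → ℝ) | p.1 ∈ B ∧ p.2 ∈ L ∧ cubeAdj p.1 p.2} with hS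
  have hSf : S.Finite := (hBf.prod hLf).subset (fun p hp => ⟨hp.1, hp.2.1⟩)
  rw [Set.ncard_eq_toFinset_card _ hSf]
  have hkey : hSf.toFinset =
      hLf.toFinset.biUnion (fun y =>
        (hBf.toFinset.filter (fun x => cubeAdj x y)).image (fun x => (x, y))) := by
    ext p
    simp only [Set.Finite.mem_toFinset, Finset.mem_biUnion, Finset.mem_image,
      Finset.mem_filter, hS, Set.mem_setOf_eq]
    constructor
    · rintro ⟨h1, h2, h3⟩
      exact ⟨p.2, h2, p.1, ⟨h1, h3⟩, rfl⟩
    · rintro ⟨y, hy, x, ⟨hxB, hadj⟩, rfl⟩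
      exact ⟨hxB, hy, hadj⟩
  rw [hkey, Finset.card_biUnion]
  · apply Finset.sum_congr rfl
    intro y _
    rw [Finset.card_image_of_injective _ (fun a b hab => (Prod.ext_iff.mp hab).1)]
    have hset : {x | x ∈ B ∧ cubeAdj y x} =
        ↑(hBf.toFinset.filter (fun x => cubeAdj x y)) := by
      ext x
      simp [cubeAdj_symm' (x := y) (y := x)]
    rw [cubeDeg, hset, Set.ncard_coe_finset]
  · intro y1 _ y2 _ hne
    simp only [Finset.disjoint_left, Finset.mem_image, Finset.mem_filter]
    rintro p ⟨x, _, rfl⟩ ⟨x', _, heq⟩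
    exact hne (Prod.ext_iff.mp heq).2.symm

/-- Case of many large-degree vertices: if `R` is `ε`-good, `B ⊆ R` and the set
`L = {x ∉ B : deg(x,B) > (1-2ε)d}` has size at least `2^d/20`, then the number of edges
of the graph of `conv R` between `B` and `R \ B` is at least `d·2^d/80`, and in
particular at least `(|B|/8)·log₂(2^d/|B|)`. -/
theorem expansion_large_L {d : ℕ} (ε : ℝ) (hε0 : 0 < ε) (hε : ε < 1/4) (hd : 10 ≤ d)
    (R : Set (Fin d → ℝ)) (hR : epsGood ε R) (B : Set (Fin d → ℝ)) (hB : B ⊆ R)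
    (hL : (2 : ℝ) ^ d / 20 ≤
      (({x | x ∈ cube01 d ∧ x ∉ B ∧ (1 - 2 * ε) * d < (cubeDeg x B : ℝ)}).ncard : ℝ)) :
    (d : ℝ) * 2 ^ d / 80 ≤ (polyEdgeCount R B (R \ B) : ℝ) ∧
    (B.ncard : ℝ) / 8 * Real.logb 2 ((2 : ℝ) ^ d / (B.ncard : ℝ))
      ≤ (polyEdgeCount R B (R \ B) : ℝ) := by
  classical
  obtain ⟨hRcube, hR1, hR2⟩ := hR
  set L : Set (Fin d → ℝ) :=
    {x | x ∈ cube01 d ∧ x ∉ B ∧ (1 - 2 * ε) * d < (cubeDeg x B : ℝ)} with hLdef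
  have hLcube : L ⊆ cube01 d := fun x hx => hx.1
  have h2 : (2:ℝ)^d/40 ≤ (((L ∩ R)).ncard : ℝ) := hR2 L hLcube hL
  have hL'fin : (L ∩ R).Finite := (cube01_finite d).subset (fun x hx => hx.1.1)
  have hBfin : B.Finite := (cube01_finite d).subset (fun x hx => hRcube (hB hx))
  set S := {p : (Fin d → ℝ) × (Fin d → ℝ) | p.1 ∈ B ∧ p.2 ∈ L ∩ R ∧ cubeAdj p.1 p.2}
    with hSdef
  have hcount : S.ncard = ∑ y ∈ hL'fin.toFinset, cubeDeg y B := ncard_pairs hBfin hL'fin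
  have hdeg : ∀ y ∈ hL'fin.toFinset, (d : ℝ)/2 ≤ (cubeDeg y B : ℝ) := by
    intro y hy
    have hy' := (hL'fin.mem_toFinset.mp hy).1.2.2
    have hd0 : (0:ℝ) ≤ (d:ℝ) := Nat.cast_nonneg d
    nlinarith
  have hSlow : (((L ∩ R)).ncard : ℝ) * ((d:ℝ)/2) ≤ (S.ncard : ℝ) := by
    rw [hcount]
    push_cast
    calc (((L ∩ R)).ncard : ℝ) * ((d:ℝ)/2)
        = ∑ _y ∈ hL'fin.toFinset, (d:ℝ)/2 := by
          rw [Finset.sum_const, Set.ncard_eq_toFinset_card _ hL'fin, nsmul_eq_mul]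
      _ ≤ ∑ y ∈ hL'fin.toFinset, (cubeDeg y B : ℝ) := Finset.sum_le_sum hdeg
  set E := {p : (Fin d → ℝ) × (Fin d → ℝ) | p.1 ∈ B ∧ p.2 ∈ R \ B ∧ IsPolytopeEdge R p.1 p.2}
    with hEdef
  have hRfin : R.Finite := (cube01_finite d).subset hRcube
  have hEfin : E.Finite := (hRfin.prod hRfin).subset (fun p hp => ⟨hB hp.1, hp.2.1.1⟩)
  have hsub : S ⊆ E := by
    rintro ⟨a, b⟩ ⟨haB, hbLR, hadj⟩
    exact ⟨haB, ⟨hbLR.2, hbLR.1.2.1⟩, adj_isPolytopeEdge hRcube (hB haB) hbLR.2 hadj⟩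
  have hSE : (S.ncard : ℝ) ≤ (E.ncard : ℝ) :=
    Nat.cast_le.mpr (Set.ncard_le_ncard hsub hEfin)
  have hpoly : (polyEdgeCount R B (R \ B) : ℝ) = (E.ncard : ℝ) := rfl
  have key : (d : ℝ) * 2 ^ d / 80 ≤ (polyEdgeCount R B (R \ B) : ℝ) := by
    rw [hpoly]
    have hd0 : (0:ℝ) ≤ (d:ℝ)/2 := by positivity
    calc (d:ℝ) * 2^d/80 = (2:ℝ)^d/40 * ((d:ℝ)/2) := by ring
      _ ≤ (((L ∩ R)).ncard : ℝ) * ((d:ℝ)/2) := mul_le_mul_of_nonneg_right h2 hd0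
      _ ≤ (S.ncard:ℝ) := hSlow
      _ ≤ (E.ncard:ℝ) := hSE
  refine ⟨key, ?_⟩
  by_cases hb : B.ncard = 0
  · rw [hb]
    simpa using (Nat.cast_nonneg (polyEdgeCount R B (R \ B)) : (0:ℝ) ≤ _)
  · have hb1 : (1:ℝ) ≤ (B.ncard : ℝ) := by exact_mod_cast Nat.one_le_iff_ne_zero.mpr hb
    have hb2 : ((B.ncard : ℝ)) ≤ 2^d := by
      have := ncard_le_of_subset_cube (fun x hx => hRcube (hB hx))
      exact_mod_cast this
    set b := (B.ncard : ℝ) with hbdef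
    have hbpos : (0:ℝ) < b := lt_of_lt_of_le one_pos hb1
    have ht1 : (1:ℝ) ≤ 2^d / b := (one_le_div hbpos).mpr hb2
    have hlogb : Real.logb 2 ((2:ℝ)^d / b) ≤ 2^d / b := by
      rw [Real.logb, div_le_iff₀ (Real.log_pos one_lt_two)]
      exact log_le_mul_log_two ht1
    have h8 : b/8 * Real.logb 2 ((2:ℝ)^d/b) ≤ b/8 * ((2:ℝ)^d/b) :=
      mul_le_mul_of_nonneg_left hlogb (by positivity)
    have heq : b/8 * ((2:ℝ)^d/b) = 2^d/8 := by
      field_simp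
    have hfin : (2:ℝ)^d/8 ≤ (d:ℝ) * 2^d/80 := by
      have hd' : (10:ℝ) ≤ (d:ℝ) := by exact_mod_cast hd
      have hp : (0:ℝ) ≤ (2:ℝ)^d := by positivity
      nlinarith
    linarith [key]
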